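/- For every nonnegative integer n, the Genocchi polynomial G_n(x) = 2^n·(B_n(x/2) - B_n((x+1)/2)) satisfies G_n(x) = 2·(B_n(x) - B^c_n(x)), where B^c_n is the n-th central Bernoulli polynomial. -/

import Mathlib

open PowerSeries

/-- `bgf t = Σ Bₙ(t)·Xⁿ/n!`, the Bernoulli polynomial generating function. -/
noncomputable def bgf (t : ℚ) : ℚ⟦X⟧ :=
  PowerSeries.mk fun n => Polynomial.aeval t ((1 / n.factorial : ℚ) • Polynomial.bernoulli n)

lemma coeff_bgf (t : ℚ) (n : ℕ) :
    PowerSeries.coeff n (bgf t) =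
      (1 / n.factorial : ℚ) * (Polynomial.bernoulli n).eval t := by
  simp [bgf, ← Polynomial.coe_aeval_eq_eval]

lemma bgf_mul (t : ℚ) : bgf t * (exp ℚ - 1) = PowerSeries.X * rescale t (exp ℚ) := by
  unfold bgf
  exact Polynomial.bernoulli_generating_function t

lemma key (x : ℚ) :
    rescale (2:ℚ) (bgf (x/2)) - rescale (2:ℚ) (bgf ((x+1)/2)) =
      (2:ℚ) • bgf x - (2:ℚ) • (rescale (2:ℚ) (bgf (1/2)) * rescale x (exp ℚ)) := by
  have hE : exp ℚ = rescale (1:ℚ) (exp ℚ) := by rw [rescale_one]; rfl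
  have h2 : rescale (2:ℚ) (exp ℚ) = exp ℚ * exp ℚ := by
    conv_rhs => rw [hE, exp_mul_exp_eq_exp_add]
    norm_num
  have hden : rescale (2:ℚ) (exp ℚ) - 1 ≠ 0 := by
    intro h
    have := congrArg (PowerSeries.coeff 1) h
    simp [coeff_rescale, coeff_exp] at this
  have hC2 : (PowerSeries.C (R := ℚ)) 2 = 2 := by
    exact map_ofNat (PowerSeries.C (R := ℚ)) 2
  have hres : ∀ t : ℚ, rescale (2:ℚ) (bgf t) * (rescale (2:ℚ) (exp ℚ) - 1)
      = 2 * PowerSeries.X * rescale (2*t) (exp ℚ) := by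
    intro t
    have hg : rescale (2:ℚ) (exp ℚ) - 1 = rescale (2:ℚ) (exp ℚ - 1) := by
      rw [map_sub, map_one]
    rw [hg, ← map_mul, bgf_mul, map_mul, rescale_X, rescale_rescale, mul_comm t 2, hC2]
  have hadd : ∀ t : ℚ, rescale t (exp ℚ) * exp ℚ = rescale (t+1) (exp ℚ) := by
    intro t
    nth_rewrite 2 [hE]
    rw [exp_mul_exp_eq_exp_add]
  have hfacts : rescale (2:ℚ) (exp ℚ) - 1 = (exp ℚ - 1) * (exp ℚ + 1) := by
    rw [h2]; ring
  have hBx : bgf x * (rescale (2:ℚ) (exp ℚ) - 1)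
      = PowerSeries.X * rescale (x+1) (exp ℚ) + PowerSeries.X * rescale x (exp ℚ) := by
    rw [hfacts, ← mul_assoc, bgf_mul, mul_add, mul_one, mul_assoc, hadd x]
  have hP : rescale (2:ℚ) (bgf (1/2)) * rescale x (exp ℚ) * (rescale (2:ℚ) (exp ℚ) - 1)
      = 2 * PowerSeries.X * rescale (x+1) (exp ℚ) := by
    rw [mul_right_comm, hres, show (2:ℚ) * (1/2) = 1 by norm_num, mul_assoc,
      exp_mul_exp_eq_exp_add, add_comm (1:ℚ) x]
  apply mul_right_cancel₀ hden
  rw [sub_mul, hres, hres, show (2:ℚ) * (x/2) = x by ring,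
    show (2:ℚ) * ((x+1)/2) = x+1 by ring,
    smul_eq_C_mul, smul_eq_C_mul, hC2, sub_mul,
    mul_assoc 2 (bgf x), hBx,
    mul_assoc 2 (rescale (2:ℚ) (bgf (1/2)) * rescale x (exp ℚ)), hP]
  ring

/-- The central Bernoulli numbers `B^c_n = 2^n·B_n(1/2)`. -/
noncomputable def centralBernoulli (n : ℕ) : ℚ :=
  2 ^ n * (Polynomial.bernoulli n).eval (1 / 2)

/-- The central Bernoulli polynomials `B^c_n(x) = Σ_{k=0}^n C(n,k)·B^c_k·x^{n-k}`. -/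
noncomputable def centralBernoulliPoly (n : ℕ) (x : ℚ) : ℚ :=
  ∑ k ∈ Finset.range (n + 1), (n.choose k : ℚ) * centralBernoulli k * x ^ (n - k)

/-- The Genocchi polynomial `G_n(x) = 2^n·(B_n(x/2) - B_n((x+1)/2))` satisfies
`G_n(x) = 2·(B_n(x) - B^c_n(x))`. -/
theorem genocchiPoly_eq (n : ℕ) (x : ℚ) :
    2 ^ n * ((Polynomial.bernoulli n).eval (x / 2) -
        (Polynomial.bernoulli n).eval ((x + 1) / 2)) =
      2 * ((Polynomial.bernoulli n).eval x - centralBernoulliPoly n x) := by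
  have h := congrArg (PowerSeries.coeff n) (key x)
  rw [map_sub, map_sub, map_smul, map_smul, coeff_rescale, coeff_rescale,
    coeff_bgf, coeff_bgf, coeff_bgf, PowerSeries.coeff_mul,
    Finset.Nat.sum_antidiagonal_eq_sum_range_succ_mk] at h
  simp only [coeff_rescale, coeff_bgf, coeff_exp, smul_eq_mul] at h
  have hn : (n.factorial : ℚ) ≠ 0 := Nat.cast_ne_zero.mpr n.factorial_ne_zero
  have h' := congrArg (fun y : ℚ => (n.factorial : ℚ) * y) h
  simp only [mul_sub, Finset.mul_sum] at h'
  have hsum : ∀ k ∈ Finset.range (n + 1),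
      (n.factorial : ℚ) * (2 * (2 ^ k * ((1 / k.factorial : ℚ) *
          (Polynomial.bernoulli k).eval (1/2)) *
          (x ^ (n - k) * algebraMap ℚ ℚ (1 / (n - k).factorial)))) =
      2 * ((n.choose k : ℚ) * centralBernoulli k * x ^ (n - k)) := by
    intro k hk
    have hkn : k ≤ n := Nat.lt_succ_iff.mp (Finset.mem_range.mp hk)
    rw [Nat.cast_choose ℚ hkn, centralBernoulli]
    have h1 : (k.factorial : ℚ) ≠ 0 := Nat.cast_ne_zero.mpr k.factorial_ne_zero
    have h2 : ((n - k).factorial : ℚ) ≠ 0 := Nat.cast_ne_zero.mpr (n - k).factorial_ne_zero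
    simp only [Algebra.algebraMap_self, RingHom.id_apply]
    field_simp
  rw [Finset.sum_congr rfl hsum, ← Finset.mul_sum] at h'
  unfold centralBernoulliPoly
  field_simp at h'
  linear_combination h'
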